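/- Let k ≥ 2 be an integer and let a ∈ ℂ with a ∉ {0, 1, −1}. Then there exist matrices B, C ∈ GL_2(ℂ) with B^k = I and C^k = I such that (B·C)^k = diag(a, a^{-1}). Consequently, diag(a, a^{-1}) is a product of 2k−3 commutators of powers of two elements of order dividing k in GL_2(ℂ). -/

import Mathlib

open scoped commutatorElement

private lemma tele13 {G : Type*} [Group G] (B C : G) (n : ℕ) :
    ⁅B, C⁆ * ((List.range n).map
      (fun m => ⁅C ^ (m + 1), B ^ (m + 2)⁆ * ⁅B ^ (m + 2), C ^ (m + 2)⁆)).prod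
    = (B * C) ^ (n + 1) * (B ^ (n + 1))⁻¹ * (C ^ (n + 1))⁻¹ := by
  induction n with
  | zero => simp [commutatorElement_def]
  | succ n ih =>
      rw [List.range_succ, List.map_append, List.prod_append, ← mul_assoc, ih]
      simp only [List.map_singleton, List.prod_singleton, commutatorElement_def, pow_succ]
      group

private lemma conjpow13 {G : Type*} [Group G] (g d : G) (n : ℕ) :
    (g * d * g⁻¹) ^ n = g * d ^ n * g⁻¹ := by
  induction n with
  | zero => simp
  | succ n ih => rw [pow_succ, pow_succ, ih]; group

open Matrix in
private lemma dpow13 (x y : ℂ) (n : ℕ) : (!![x, 0; 0, y]) ^ n = !![x ^ n, 0; 0, y ^ n] := by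
  induction n with
  | zero => simp [Matrix.one_fin_two]
  | succ n ih =>
      rw [pow_succ, ih, Matrix.mul_fin_two]
      ext i j
      fin_cases i <;> fin_cases j <;> simp [pow_succ]

open Matrix in
private lemma L1of13 (ω p s r : ℂ) (hps : p + s = 1 + ω) (hr : r = p * s - ω) :
    !![p, 1; r, s] * !![1, 1; ω - p, 1 - p] = !![1, 1; ω - p, 1 - p] * !![ω, 0; 0, 1] := by
  subst hr
  ext i j
  fin_cases i <;> fin_cases j
  all_goals simp [Matrix.mul_apply, Fin.sum_univ_two]
  all_goals try ring
  all_goals try linear_combination ω * hps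
  all_goals linear_combination hps

open Matrix in
private lemma L2of13 (ω lam p s r : ℂ) (hω0 : ω ≠ 0) (hlam0 : lam ≠ 0)
    (hr : r = p * s - ω) :
    !![p, 1; r, s] * !![s*lam/ω, -(1/(ω*lam)); -(r*lam/ω), p/(ω*lam)] = !![lam, 0; 0, lam⁻¹] := by
  subst hr
  ext i j
  fin_cases i <;> fin_cases j
  all_goals simp [Matrix.mul_apply, Fin.sum_univ_two]
  all_goals field_simp
  all_goals ring

open Matrix in
private lemma L3of13 (ω lam p s r : ℂ) (hω0 : ω ≠ 0) (hlam0 : lam ≠ 0)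
    (hr : r = p * s - ω) (htr : p + s * lam ^ 2 = (1 + ω) * lam) :
    !![s*lam/ω, -(1/(ω*lam)); -(r*lam/ω), p/(ω*lam)] *
      !![-(1/(ω*lam)), -(1/(ω*lam)); ω⁻¹ - s*lam/ω, 1 - s*lam/ω] =
    !![-(1/(ω*lam)), -(1/(ω*lam)); ω⁻¹ - s*lam/ω, 1 - s*lam/ω] * !![ω⁻¹, 0; 0, 1] := by
  subst hr
  ext i j
  fin_cases i <;> fin_cases j
  all_goals simp [Matrix.mul_apply, Fin.sum_univ_two]
  all_goals try field_simp
  all_goals try ring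
  all_goals try linear_combination (ω^4*lam) * htr
  all_goals try linear_combination htr
  all_goals linear_combination ω * htr

/-- For `k ≥ 2` and `a ∈ ℂ \ {0, 1, -1}`, there are `B, C ∈ GL_2(ℂ)` with
`B^k = 1` and `C^k = 1` such that `(BC)^k = diag(a, a⁻¹)`; consequently
`diag(a, a⁻¹)` equals the product of the `2k-3` commutators
`⁅B,C⁆ * ∏_{j=2}^{k-1} (⁅C^(j-1), B^j⁆ * ⁅B^j, C^j⁆)` of powers of `B` and `C`. -/
theorem stmt13 (k : ℕ) (hk : 2 ≤ k) (a : ℂ) (ha0 : a ≠ 0) (ha1 : a ≠ 1) (ham1 : a ≠ -1) :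
    ∃ B C : GL (Fin 2) ℂ,
      B ^ k = 1 ∧ C ^ k = 1 ∧
      (((B * C) ^ k : GL (Fin 2) ℂ) : Matrix (Fin 2) (Fin 2) ℂ) = !![a, 0; 0, a⁻¹] ∧
      ((⁅B, C⁆ *
        (((List.range (k - 2)).map
          (fun m => ⁅C ^ (m + 1), B ^ (m + 2)⁆ * ⁅B ^ (m + 2), C ^ (m + 2)⁆)).prod) :
            GL (Fin 2) ℂ) : Matrix (Fin 2) (Fin 2) ℂ) = !![a, 0; 0, a⁻¹] := by
  classical
  have hk0 : (k:ℂ) ≠ 0 := Nat.cast_ne_zero.mpr (by omega)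
  set ω : ℂ := Complex.exp (2 * Real.pi * Complex.I / k) with hωdef
  have hprim : IsPrimitiveRoot ω k := Complex.isPrimitiveRoot_exp k (by omega)
  have hωk : ω ^ k = 1 := hprim.pow_eq_one
  have hω0 : ω ≠ 0 := Complex.exp_ne_zero _
  have hω1 : ω ≠ 1 := by
    intro h
    have h2 := hprim.dvd_of_pow_eq_one 1 (by rw [pow_one, h])
    have := Nat.le_of_dvd one_pos h2
    omega
  set lam : ℂ := Complex.exp (Complex.log a / k) with hlamdef
  have hlamk : lam ^ k = a := by
    rw [← Complex.exp_nat_mul, mul_div_cancel₀ _ hk0, Complex.exp_log ha0]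
  have hlam0 : lam ≠ 0 := Complex.exp_ne_zero _
  have hlam1 : (1:ℂ) + lam ≠ 0 := by
    intro h
    have hl : lam = -1 := by linear_combination h
    rcases Nat.even_or_odd k with he | ho
    · exact ha1 (by rw [← hlamk, hl, he.neg_one_pow])
    · exact ham1 (by rw [← hlamk, hl, ho.neg_one_pow])
  -- the parameters
  set p : ℂ := (1 + ω) * lam / (1 + lam) with hpdef
  set s : ℂ := (1 + ω) / (1 + lam) with hsdef
  set r : ℂ := p * s - ω with hrdef
  have hps : p + s = 1 + ω := by
    rw [hpdef, hsdef]; field_simp; ring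
  have htr : p + s * lam ^ 2 = (1 + ω) * lam := by
    rw [hpdef, hsdef]; field_simp
  -- the matrices
  have hdetB : (!![p, 1; r, s]).det ≠ 0 := by
    rw [Matrix.det_fin_two_of, hrdef]; simpa using hω0
  have hdetC : (!![s*lam/ω, -(1/(ω*lam)); -(r*lam/ω), p/(ω*lam)]).det ≠ 0 := by
    rw [Matrix.det_fin_two_of]
    have : s*lam/ω * (p/(ω*lam)) - (-(1/(ω*lam))) * (-(r*lam/ω)) = ω⁻¹ := by
      rw [hrdef]; field_simp; ring
    rw [this]
    exact inv_ne_zero hω0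
  have hdetg : (!![1, 1; ω - p, 1 - p]).det ≠ 0 := by
    rw [Matrix.det_fin_two_of]
    have : (1:ℂ) * (1 - p) - 1 * (ω - p) = 1 - ω := by ring
    rw [this]
    exact sub_ne_zero_of_ne (Ne.symm hω1)
  have hdeth : (!![-(1/(ω*lam)), -(1/(ω*lam)); ω⁻¹ - s*lam/ω, 1 - s*lam/ω]).det ≠ 0 := by
    rw [Matrix.det_fin_two_of]
    have : -(1/(ω*lam)) * (1 - s*lam/ω) - (-(1/(ω*lam))) * (ω⁻¹ - s*lam/ω)
        = -(1/(ω*lam)) * (1 - ω⁻¹) := by ring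
    rw [this]
    refine mul_ne_zero (neg_ne_zero.mpr (one_div_ne_zero (mul_ne_zero hω0 hlam0))) ?_
    rw [sub_ne_zero]
    intro h
    exact hω1 (by rw [← inv_inv ω, ← h, inv_one])
  have hdetD : (!![ω, 0; 0, (1:ℂ)]).det ≠ 0 := by
    rw [Matrix.det_fin_two_of]; simpa using hω0
  have hdetE : (!![ω⁻¹, 0; 0, (1:ℂ)]).det ≠ 0 := by
    rw [Matrix.det_fin_two_of]; simpa using inv_ne_zero hω0
  have hdetM : (!![lam, 0; 0, lam⁻¹]).det ≠ 0 := by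
    rw [Matrix.det_fin_two_of]
    have : lam * lam⁻¹ - 0 * 0 = 1 := by field_simp; norm_num
    rw [this]; exact one_ne_zero
  -- GL elements
  set B : GL (Fin 2) ℂ := Matrix.GeneralLinearGroup.mkOfDetNeZero _ hdetB with hBdef
  set C : GL (Fin 2) ℂ := Matrix.GeneralLinearGroup.mkOfDetNeZero _ hdetC with hCdef
  set gU : GL (Fin 2) ℂ := Matrix.GeneralLinearGroup.mkOfDetNeZero _ hdetg with hgdef
  set hU : GL (Fin 2) ℂ := Matrix.GeneralLinearGroup.mkOfDetNeZero _ hdeth with hhdef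
  set DU : GL (Fin 2) ℂ := Matrix.GeneralLinearGroup.mkOfDetNeZero _ hdetD with hDdef
  set EU : GL (Fin 2) ℂ := Matrix.GeneralLinearGroup.mkOfDetNeZero _ hdetE with hEdef
  set MU : GL (Fin 2) ℂ := Matrix.GeneralLinearGroup.mkOfDetNeZero _ hdetM with hMdef
  have hBval : (B : Matrix (Fin 2) (Fin 2) ℂ) = !![p, 1; r, s] := rfl
  have hCval : (C : Matrix (Fin 2) (Fin 2) ℂ)
      = !![s*lam/ω, -(1/(ω*lam)); -(r*lam/ω), p/(ω*lam)] := rfl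
  have hgval : (gU : Matrix (Fin 2) (Fin 2) ℂ) = !![1, 1; ω - p, 1 - p] := rfl
  have hhval : (hU : Matrix (Fin 2) (Fin 2) ℂ)
      = !![-(1/(ω*lam)), -(1/(ω*lam)); ω⁻¹ - s*lam/ω, 1 - s*lam/ω] := rfl
  have hDval : (DU : Matrix (Fin 2) (Fin 2) ℂ) = !![ω, 0; 0, (1:ℂ)] := rfl
  have hEval : (EU : Matrix (Fin 2) (Fin 2) ℂ) = !![ω⁻¹, 0; 0, (1:ℂ)] := rfl
  have hMval : (MU : Matrix (Fin 2) (Fin 2) ℂ) = !![lam, 0; 0, lam⁻¹] := rfl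
  -- key unit identities
  have hDpow : DU ^ k = 1 := by
    refine Units.ext ?_
    rw [Units.val_pow_eq_pow_val, hDval, dpow13, hωk, one_pow, Units.val_one,
      Matrix.one_fin_two]
  have hEpow : EU ^ k = 1 := by
    refine Units.ext ?_
    rw [Units.val_pow_eq_pow_val, hEval, dpow13, inv_pow, hωk, inv_one, one_pow,
      Units.val_one, Matrix.one_fin_two]
  have hBconj : B = gU * DU * gU⁻¹ := by
    rw [eq_mul_inv_iff_mul_eq]
    refine Units.ext ?_
    rw [Units.val_mul, Units.val_mul, hBval, hgval, hDval]
    exact L1of13 ω p s r hps hrdef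
  have hCconj : C = hU * EU * hU⁻¹ := by
    rw [eq_mul_inv_iff_mul_eq]
    refine Units.ext ?_
    rw [Units.val_mul, Units.val_mul, hCval, hhval, hEval]
    exact L3of13 ω lam p s r hω0 hlam0 hrdef htr
  have hBk : B ^ k = 1 := by rw [hBconj, conjpow13, hDpow, mul_one, mul_inv_cancel]
  have hCk : C ^ k = 1 := by rw [hCconj, conjpow13, hEpow, mul_one, mul_inv_cancel]
  have hBC : B * C = MU := by
    refine Units.ext ?_
    rw [Units.val_mul, hBval, hCval, hMval]
    exact L2of13 ω lam p s r hω0 hlam0 hrdef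
  have hMk : (((B * C) ^ k : GL (Fin 2) ℂ) : Matrix (Fin 2) (Fin 2) ℂ) = !![a, 0; 0, a⁻¹] := by
    rw [hBC, Units.val_pow_eq_pow_val, hMval, dpow13, hlamk, inv_pow, hlamk]
  refine ⟨B, C, hBk, hCk, hMk, ?_⟩
  have hk2 : k - 2 + 1 = k - 1 := by omega
  have hk1 : k - 1 + 1 = k := by omega
  have htl := tele13 B C (k - 2)
  rw [hk2] at htl
  have hBinv : (B ^ (k - 1))⁻¹ = B := by
    refine inv_eq_of_mul_eq_one_right ?_
    rw [← pow_succ, hk1, hBk]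
  have hCinv : (C ^ (k - 1))⁻¹ = C := by
    refine inv_eq_of_mul_eq_one_right ?_
    rw [← pow_succ, hk1, hCk]
  rw [htl, hBinv, hCinv, mul_assoc, ← pow_succ, hk1, hMk]
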